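/- Let s = I(0_K, a_1, ..., a_{T-1}) and s' = I(1_K, a_1, ..., a_{T-1}) with d(a_x) = d(a_{T-x}) = c for all 1 ≤ x ≤ T-1, where c ≠ K is a constant, and suppose s has ideal autocorrelation. Then R_{ss'} = R_{s's} and this common cross-correlation function takes exactly three values: KT - 2K at τ = 0, -1 - 2K at nonzero τ ≡ 0 mod T, and -1 + 2c at τ ≢ 0 mod T. -/

import Mathlib

/-- Periodic (cross-)correlation of binary sequences of period `N`. -/
def corr (N : ℕ) (a b : ℕ → ZMod 2) (τ : ℕ) : ℤ :=
  ∑ t ∈ Finset.range N, (-1 : ℤ) ^ ((a t + b (t + τ)).val)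

/-- Balance difference `d(a) = 2|support(a)| - K` of a sequence of period `K`. -/
def bal (K : ℕ) (a : ℕ → ZMod 2) : ℤ :=
  2 * ((((Finset.range K).filter (fun k => a k = 1)).card : ℤ)) - (K : ℤ)

/-- If `d(a_x) = d(a_{T-x}) = c ≠ K` and `s` has ideal autocorrelation, then
`R_{ss'} = R_{s's}` takes exactly the three values `KT - 2K`, `-1 - 2K`, `-1 + 2c`. -/
lemma balSum (K : ℕ) (b : ℕ → ZMod 2) :
    ∑ k ∈ Finset.range K, (-1:ℤ)^((b k).val) = -(bal K b) := by
  have h : ∀ x : ZMod 2, (-1:ℤ)^x.val = 1 - 2 * (if x = 1 then 1 else 0) := by decide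
  simp only [h, bal]
  rw [Finset.sum_sub_distrib, Finset.sum_const, Finset.card_range, ← Finset.mul_sum,
    Finset.sum_boole]
  ring

lemma shift_one (K : ℕ) (g : ℕ → ℤ) (hg : ∀ n, g (n + K) = g n) :
    ∑ k ∈ Finset.range K, g (k + 1) = ∑ k ∈ Finset.range K, g k := by
  have h1 := Finset.sum_range_succ' g K
  have h2 := Finset.sum_range_succ g K
  have h3 : g K = g 0 := by simpa using hg 0
  omega

lemma shift (K : ℕ) (g : ℕ → ℤ) (hg : ∀ n, g (n + K) = g n) (q : ℕ) :
    ∑ k ∈ Finset.range K, g (k + q) = ∑ k ∈ Finset.range K, g k := by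
  induction q with
  | zero => simp
  | succ q ih =>
    have h := shift_one K (fun n => g (n + q)) (fun n => by
      simp only [Nat.add_right_comm n K q]; exact hg (n + q))
    calc ∑ k ∈ Finset.range K, g (k + (q+1))
        = ∑ k ∈ Finset.range K, g ((k+1) + q) := by
          apply Finset.sum_congr rfl; intro k _; congr 1; omega
      _ = ∑ k ∈ Finset.range K, g (k + q) := h
      _ = _ := ih

lemma rmod_eq (T x : ℕ) (hT : 0 < T) (hx : x < T) :
    (T - x) % T = if x = 0 then 0 else T - x := by
  rcases Nat.eq_zero_or_pos x with h | h
  · simp [h, Nat.mod_self]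
  · rw [if_neg (by omega), Nat.mod_eq_of_lt (by omega)]

lemma filter_eq (K T τ : ℕ) (hT : 0 < T) :
    (Finset.range (K*T)).filter (fun t => T ∣ t + τ)
      = (Finset.range K).image (fun k => k*T + (T - τ % T) % T) := by
  have hx : τ % T < T := Nat.mod_lt _ hT
  have hr := rmod_eq T (τ % T) hT hx
  have hτ : T * (τ / T) + τ % T = τ := Nat.div_add_mod τ T
  ext t
  simp only [Finset.mem_filter, Finset.mem_range, Finset.mem_image]
  constructor
  · rintro ⟨htK, m, hm⟩
    have hdm : t / T * T + t % T = t := Nat.div_add_mod' t T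
    have hρ : t % T < T := Nat.mod_lt _ hT
    have h0 : (t % T + τ % T) % T = 0 := by
      have : (t + τ) % T = 0 := by rw [hm]; exact Nat.mul_mod_right T m
      rwa [Nat.add_mod] at this
    obtain ⟨u, hu⟩ := Nat.dvd_of_mod_eq_zero h0
    have hu2 : u < 2 := by
      by_contra hc
      have : T * 2 ≤ T * u := Nat.mul_le_mul_left T (by omega)
      omega
    have key : t % T + τ % T = 0 ∨ t % T + τ % T = T := by
      interval_cases u <;> omega
    refine ⟨t / T, (Nat.div_lt_iff_lt_mul hT).2 htK, ?_⟩
    rcases Nat.eq_zero_or_pos (τ % T) with h | h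
    · rw [hr, if_pos h]; omega
    · rw [hr, if_neg (by omega)]; omega
  · rintro ⟨k, hk, rfl⟩
    constructor
    · have h1 : (T - τ % T) % T < T := Nat.mod_lt _ hT
      calc k*T + (T - τ % T) % T < (k+1)*T := by rw [Nat.add_mul]; omega
        _ ≤ K*T := Nat.mul_le_mul_right T (by omega)
    · rcases Nat.eq_zero_or_pos (τ % T) with h | h
      · rw [hr, if_pos h]
        exact dvd_add (dvd_add (dvd_mul_left T k) (by simp)) (Nat.dvd_of_mod_eq_zero h)
      · have heq : k*T + (T - τ % T) % T + τ = k*T + T * (τ/T) + T := by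
          rw [hr, if_neg (by omega)]; omega
        rw [heq]
        exact dvd_add (dvd_add (dvd_mul_left T k) (dvd_mul_right T (τ/T))) dvd_rfl


theorem stmt17 (K T : ℕ) (hK : 0 < K) (hT : 0 < T)
    (a : ℕ → ℕ → ZMod 2) (s s' : ℕ → ZMod 2)
    (ha : ∀ i, Function.Periodic (a i) K)
    (hs : Function.Periodic s (K * T)) (hs' : Function.Periodic s' (K * T))
    (hs0 : ∀ k, s (k * T) = 0) (hs'0 : ∀ k, s' (k * T) = 1)
    (hcol : ∀ k i, 1 ≤ i → i < T → s (k * T + i) = a i k)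
    (hcol' : ∀ k i, 1 ≤ i → i < T → s' (k * T + i) = a i k)
    (c : ℤ) (hcK : c ≠ (K : ℤ))
    (hbal : ∀ x : ℕ, 1 ≤ x → x < T → bal K (a x) = c ∧ bal K (a (T - x)) = c)
    (hideal : ∀ τ : ℕ, ¬ (K * T ∣ τ) → corr (K * T) s s τ = -1) :
    (∀ τ : ℕ, corr (K * T) s s' τ = corr (K * T) s' s τ) ∧
    (∀ τ : ℕ, K * T ∣ τ → corr (K * T) s s' τ = (K : ℤ) * T - 2 * K) ∧
    (∀ τ : ℕ, T ∣ τ → ¬ (K * T ∣ τ) → corr (K * T) s s' τ = -1 - 2 * K) ∧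
    (∀ τ : ℕ, ¬ (T ∣ τ) → corr (K * T) s s' τ = -1 + 2 * c) := by

  have hsign : ∀ x : ZMod 2, (-1:ℤ)^((x+1).val) = -(-1:ℤ)^x.val := by decide
  have hsign' : ∀ x : ZMod 2, (-1:ℤ)^(((1:ZMod 2)+x).val) = -(-1:ℤ)^x.val := by decide
  have hdvd : ∀ u : ℕ, T ∣ u → s u = 0 ∧ s' u = 1 := by
    rintro u ⟨m, rfl⟩
    rw [mul_comm]
    exact ⟨hs0 m, hs'0 m⟩
  have hndvd : ∀ u : ℕ, ¬ T ∣ u → s' u = s u := by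
    intro u hu
    have hdm : u / T * T + u % T = u := Nat.div_add_mod' u T
    have h1 : 1 ≤ u % T := by
      rcases Nat.eq_zero_or_pos (u % T) with h | h
      · exact absurd (Nat.dvd_of_mod_eq_zero h) hu
      · exact h
    have h2 : u % T < T := Nat.mod_lt _ hT
    rw [← hdm, hcol' (u/T) (u%T) h1 h2, hcol (u/T) (u%T) h1 h2]
  -- value of D τ
  have hDval : ∀ τ : ℕ,
      ∑ t ∈ (Finset.range (K*T)).filter (fun t => T ∣ t + τ), (-1:ℤ)^((s t).val)
        = if T ∣ τ then (K:ℤ) else -c := by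
    intro τ
    have hx : τ % T < T := Nat.mod_lt _ hT
    rw [filter_eq K T τ hT, Finset.sum_image (by
      intro x _ y _ hxy
      have hxy' : x * T = y * T := by beta_reduce at hxy; omega
      exact Nat.eq_of_mul_eq_mul_right hT hxy')]
    rcases Nat.eq_zero_or_pos (τ % T) with h | h
    · rw [if_pos (Nat.dvd_of_mod_eq_zero h)]
      have hr : (T - τ % T) % T = 0 := by rw [rmod_eq T _ hT hx, if_pos h]
      rw [hr]
      have hone : ∀ k ∈ Finset.range K, (-1:ℤ)^((s (k*T + 0)).val) = 1 := by
        intro k _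
        rw [Nat.add_zero, hs0 k]
        rfl
      rw [Finset.sum_congr rfl hone, Finset.sum_const, Finset.card_range]
      simp
    · have hnd : ¬ T ∣ τ := by
        rintro ⟨m, rfl⟩
        simp [Nat.mul_mod_right] at h
      rw [if_neg hnd]
      have hr : (T - τ % T) % T = T - τ % T := by
        rw [rmod_eq T _ hT hx, if_neg (by omega)]
      rw [hr]
      have hcg : ∀ k ∈ Finset.range K,
          (-1:ℤ)^((s (k*T + (T - τ % T))).val) = (-1:ℤ)^((a (T - τ % T) k).val) := by
        intro k _
        rw [hcol k _ (by omega) (by omega)]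
      rw [Finset.sum_congr rfl hcg, balSum, (hbal (τ % T) h hx).2]
  -- value of D' τ
  have hD'val : ∀ τ : ℕ,
      ∑ t ∈ (Finset.range (K*T)).filter (fun t => T ∣ t), (-1:ℤ)^((s (t + τ)).val)
        = if T ∣ τ then (K:ℤ) else -c := by
    intro τ
    have hx : τ % T < T := Nat.mod_lt _ hT
    have hfe : (Finset.range (K*T)).filter (fun t => T ∣ t)
        = (Finset.range K).image (fun k => k*T) := by
      have h := filter_eq K T 0 hT
      simpa using h
    rw [hfe, Finset.sum_image (by
      intro x _ y _ hxy
      exact Nat.eq_of_mul_eq_mul_right hT hxy)]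
    have hsplit : ∀ k : ℕ, k*T + τ = (k + τ/T)*T + τ % T := by
      intro k
      have hτ : τ/T*T + τ % T = τ := Nat.div_add_mod' τ T
      rw [Nat.add_mul]
      omega
    simp only [hsplit]
    rcases Nat.eq_zero_or_pos (τ % T) with h | h
    · rw [if_pos (Nat.dvd_of_mod_eq_zero h)]
      have hone : ∀ k ∈ Finset.range K, (-1:ℤ)^((s ((k + τ/T)*T + τ % T)).val) = 1 := by
        intro k _
        rw [h, Nat.add_zero, hs0 (k + τ/T)]
        rfl
      rw [Finset.sum_congr rfl hone, Finset.sum_const, Finset.card_range]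
      simp
    · have hnd : ¬ T ∣ τ := by
        rintro ⟨m, rfl⟩
        simp [Nat.mul_mod_right] at h
      rw [if_neg hnd]
      have hcg : ∀ k ∈ Finset.range K,
          (-1:ℤ)^((s ((k + τ/T)*T + τ % T)).val)
            = (fun n => (-1:ℤ)^((a (τ % T) n).val)) (k + τ/T) := by
        intro k _
        simp only []
        rw [hcol (k + τ/T) (τ % T) h hx]
      rw [Finset.sum_congr rfl hcg,
        shift K (fun n => (-1:ℤ)^((a (τ % T) n).val)) (fun n => by show (-1:ℤ)^((a (τ % T) (n+K)).val) = (-1:ℤ)^((a (τ % T) n).val); rw [ha (τ % T) n]) (τ/T),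
        balSum, (hbal (τ % T) h hx).1]
  -- claim A
  have claimA : ∀ τ : ℕ, corr (K*T) s s' τ
      = corr (K*T) s s τ - 2 * (if T ∣ τ then (K:ℤ) else -c) := by
    intro τ
    rw [← hDval τ]
    unfold corr
    rw [← Finset.sum_filter_add_sum_filter_not (Finset.range (K*T)) (fun t => T ∣ t + τ)
        (fun t => (-1:ℤ)^((s t + s' (t + τ)).val)),
      ← Finset.sum_filter_add_sum_filter_not (Finset.range (K*T)) (fun t => T ∣ t + τ)
        (fun t => (-1:ℤ)^((s t + s (t + τ)).val))]
    have e1 : ∀ t ∈ (Finset.range (K*T)).filter (fun t => T ∣ t + τ),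
        (-1:ℤ)^((s t + s' (t + τ)).val) = -(-1:ℤ)^((s t).val) := by
      intro t ht
      simp only [Finset.mem_filter] at ht
      rw [(hdvd _ ht.2).2, hsign]
    have e2 : ∀ t ∈ (Finset.range (K*T)).filter (fun t => T ∣ t + τ),
        (-1:ℤ)^((s t + s (t + τ)).val) = (-1:ℤ)^((s t).val) := by
      intro t ht
      simp only [Finset.mem_filter] at ht
      rw [(hdvd _ ht.2).1, add_zero]
    have e3 : ∀ t ∈ (Finset.range (K*T)).filter (fun t => ¬ T ∣ t + τ),
        (-1:ℤ)^((s t + s' (t + τ)).val) = (-1:ℤ)^((s t + s (t + τ)).val) := by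
      intro t ht
      simp only [Finset.mem_filter] at ht
      rw [hndvd _ ht.2]
    rw [Finset.sum_congr rfl e1, Finset.sum_congr rfl e2, Finset.sum_congr rfl e3,
      Finset.sum_neg_distrib]
    ring
  -- claim B
  have claimB : ∀ τ : ℕ, corr (K*T) s' s τ
      = corr (K*T) s s τ - 2 * (if T ∣ τ then (K:ℤ) else -c) := by
    intro τ
    rw [← hD'val τ]
    unfold corr
    rw [← Finset.sum_filter_add_sum_filter_not (Finset.range (K*T)) (fun t => T ∣ t)
        (fun t => (-1:ℤ)^((s' t + s (t + τ)).val)),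
      ← Finset.sum_filter_add_sum_filter_not (Finset.range (K*T)) (fun t => T ∣ t)
        (fun t => (-1:ℤ)^((s t + s (t + τ)).val))]
    have e1 : ∀ t ∈ (Finset.range (K*T)).filter (fun t => T ∣ t),
        (-1:ℤ)^((s' t + s (t + τ)).val) = -(-1:ℤ)^((s (t + τ)).val) := by
      intro t ht
      simp only [Finset.mem_filter] at ht
      rw [(hdvd _ ht.2).2, hsign']
    have e2 : ∀ t ∈ (Finset.range (K*T)).filter (fun t => T ∣ t),
        (-1:ℤ)^((s t + s (t + τ)).val) = (-1:ℤ)^((s (t + τ)).val) := by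
      intro t ht
      simp only [Finset.mem_filter] at ht
      rw [(hdvd _ ht.2).1, zero_add]
    have e3 : ∀ t ∈ (Finset.range (K*T)).filter (fun t => ¬ T ∣ t),
        (-1:ℤ)^((s' t + s (t + τ)).val) = (-1:ℤ)^((s t + s (t + τ)).val) := by
      intro t ht
      simp only [Finset.mem_filter] at ht
      rw [hndvd _ ht.2]
    rw [Finset.sum_congr rfl e1, Finset.sum_congr rfl e2, Finset.sum_congr rfl e3,
      Finset.sum_neg_distrib]
    ring
  -- autocorrelation at multiples of the period
  have hcorr0 : ∀ τ : ℕ, K * T ∣ τ → corr (K*T) s s τ = ((K*T : ℕ) : ℤ) := by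
    rintro τ ⟨m, rfl⟩
    unfold corr
    have hone : ∀ t ∈ Finset.range (K*T), (-1:ℤ)^((s t + s (t + K*T*m)).val) = 1 := by
      intro t _
      have h1 : s (t + m*(K*T)) = s t := (hs.nat_mul m) t
      rw [show K*T*m = m*(K*T) by ring, h1]
      have h2 : s t + s t = 0 := by
        have h : ∀ x : ZMod 2, x + x = 0 := by decide
        exact h _
      rw [h2]
      rfl
    rw [Finset.sum_congr rfl hone, Finset.sum_const, Finset.card_range]
    simp
  refine ⟨?_, ?_, ?_, ?_⟩
  · intro τ
    rw [claimA τ, claimB τ]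
  · intro τ hKT
    have hTd : T ∣ τ := dvd_trans (dvd_mul_left T K) hKT
    rw [claimA τ, if_pos hTd, hcorr0 τ hKT]
    push_cast
    ring
  · intro τ hTd hKT
    rw [claimA τ, if_pos hTd, hideal τ hKT]
  · intro τ hTd
    have hKT : ¬ K * T ∣ τ := fun hd => hTd (dvd_trans (dvd_mul_left T K) hd)
    rw [claimA τ, if_neg hTd, hideal τ hKT]
    ring
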